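/- If F(z) ∈ ℂ[[z]] is a k-Mahler function, i.e., there exist polynomials a_0(z),...,a_d(z) ∈ ℂ[z] with a_0(z)a_d(z) ≠ 0 and Σ_{j=0}^d a_j(z) F(z^{k^j}) = 0, then F(z) has positive radius of convergence. -/

import Mathlib

open PowerSeries

/-- The substitution `z ↦ z^m` on formal power series: `(psSubst m F)(z) = F(z^m)`. -/
noncomputable def psSubst (m : ℕ) (F : PowerSeries ℂ) : PowerSeries ℂ :=
  PowerSeries.mk fun n => if m ∣ n then PowerSeries.coeff (n / m) F else 0

/-- `F` is `k`-Mahler: there are polynomials `a 0, …, a d` with `a 0 * a d ≠ 0` and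
`Σ_{j=0}^d a_j(z) F(z^{k^j}) = 0`. -/
def IsKMahler (k : ℕ) (F : PowerSeries ℂ) : Prop :=
  ∃ (d : ℕ) (a : ℕ → Polynomial ℂ), a 0 * a d ≠ 0 ∧
    ∑ j ∈ Finset.range (d + 1), (a j : PowerSeries ℂ) * psSubst (k ^ j) F = 0

set_option maxHeartbeats 1000000 in
/-- A `k`-Mahler function has a positive radius of convergence. -/
theorem kMahler_positive_radius (k : ℕ) (hk : 2 ≤ k) (F : PowerSeries ℂ)
    (hF : IsKMahler k F) :
    ∃ r : ℝ, 0 < r ∧ ∀ z : ℂ, ‖z‖ < r →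
      Summable fun n : ℕ => ‖PowerSeries.coeff n F‖ * ‖z‖ ^ n := by
  obtain ⟨d, a, ha, heq⟩ := hF
  have ha0 : a 0 ≠ 0 := fun h => ha (by simp [h])
  set h0 : ℕ := (a 0).natTrailingDegree with hh0
  set c : ℂ := (a 0).coeff h0 with hcdef
  have hc : c ≠ 0 := Polynomial.coeff_natTrailingDegree_ne_zero.mpr ha0
  have hcpos : (0:ℝ) < ‖c‖ := norm_pos_iff.mpr hc
  set D : ℕ := (Finset.range (d+1)).sup (fun j => (a j).natDegree) with hD
  set S : ℝ := ∑ j ∈ Finset.range (d+1), ∑ i ∈ Finset.range (D+1), ‖(a j).coeff i‖ with hSdef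
  have hS : 0 ≤ S := Finset.sum_nonneg fun j _ => Finset.sum_nonneg fun i _ => norm_nonneg _
  set n0 : ℕ := max (h0 + 1) (D + 1) with hn0
  set M : ℝ := 1 + ∑ m ∈ Finset.range n0, ‖PowerSeries.coeff m F‖ with hM
  have hM1 : (1:ℝ) ≤ M := le_add_of_nonneg_right (Finset.sum_nonneg fun i _ => norm_nonneg _)
  have hM0 : (0:ℝ) ≤ M := le_trans zero_le_one hM1
  set C : ℝ := 1 + S / ‖c‖ with hC
  have hC1 : (1:ℝ) ≤ C := le_add_of_nonneg_right (div_nonneg hS hcpos.le)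
  have hC0 : (0:ℝ) < C := lt_of_lt_of_le one_pos hC1
  -- coefficient identity
  have hcoeff : ∀ N : ℕ, ∑ j ∈ Finset.range (d+1), ∑ p ∈ Finset.HasAntidiagonal.antidiagonal N,
      (a j).coeff p.1 * (if k ^ j ∣ p.2 then PowerSeries.coeff (p.2 / k ^ j) F else 0) = 0 := by
    intro N
    have h := congrArg (PowerSeries.coeff N) heq
    simpa [map_sum, PowerSeries.coeff_mul, psSubst, Polynomial.coeff_coe,
      PowerSeries.coeff_mk] using h
  -- key recursive bound
  have key : ∀ n, n0 ≤ n → (∀ m, m < n → ‖PowerSeries.coeff m F‖ ≤ M * C ^ m) →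
      ‖PowerSeries.coeff n F‖ ≤ M * C ^ n := by
    intro n hn ih
    have hh0n : h0 < n := lt_of_lt_of_le (lt_of_lt_of_le (Nat.lt_succ_self h0) (le_max_left _ _)) hn
    have hDn : D < n := lt_of_lt_of_le (lt_of_lt_of_le (Nat.lt_succ_self D) (le_max_right _ _)) hn
    set N : ℕ := n + h0 with hN
    set B : ℝ := M * C ^ (n-1) with hB
    have hB0 : 0 ≤ B := mul_nonneg hM0 (pow_nonneg hC0.le _)
    have hBle : ∀ m, m < n → ‖PowerSeries.coeff m F‖ ≤ B := by
      intro m hm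
      refine le_trans (ih m hm) (mul_le_mul_of_nonneg_left ?_ hM0)
      exact pow_le_pow_right₀ hC1 (by omega)
    have e0 := hcoeff N
    rw [Finset.sum_range_succ'] at e0
    have hmem : ((h0, n) : ℕ×ℕ) ∈ Finset.HasAntidiagonal.antidiagonal N := by
      simp [Finset.HasAntidiagonal.mem_antidiagonal]; omega
    rw [← Finset.add_sum_erase _ _ hmem] at e0
    simp only [pow_zero, one_dvd, if_true, Nat.div_one] at e0
    have e1 : c * PowerSeries.coeff n F =
        -((∑ j ∈ Finset.range d, ∑ p ∈ Finset.HasAntidiagonal.antidiagonal N,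
          (a (j+1)).coeff p.1 * (if k ^ (j+1) ∣ p.2 then PowerSeries.coeff (p.2 / k ^ (j+1)) F else 0)) +
         ∑ p ∈ (Finset.HasAntidiagonal.antidiagonal N).erase (h0, n),
          (a 0).coeff p.1 * PowerSeries.coeff p.2 F) := by
      linear_combination e0
    set R1 : ℂ := ∑ j ∈ Finset.range d, ∑ p ∈ Finset.HasAntidiagonal.antidiagonal N,
      (a (j+1)).coeff p.1 * (if k ^ (j+1) ∣ p.2 then PowerSeries.coeff (p.2 / k ^ (j+1)) F else 0)
      with hR1
    set R2 : ℂ := ∑ p ∈ (Finset.HasAntidiagonal.antidiagonal N).erase (h0, n),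
      (a 0).coeff p.1 * PowerSeries.coeff p.2 F with hR2
    -- sums of coefficient norms collapse to a fixed sum
    have sumbound : ∀ j ∈ Finset.range (d+1),
        ∑ p ∈ Finset.HasAntidiagonal.antidiagonal N, ‖(a j).coeff p.1‖ =
        ∑ i ∈ Finset.range (D+1), ‖(a j).coeff i‖ := by
      intro j hj
      rw [Finset.Nat.sum_antidiagonal_eq_sum_range_succ_mk]
      symm
      apply Finset.sum_subset
      · intro i hi
        simp only [Finset.mem_range] at hi ⊢
        omega
      · intro i _ hi
        simp only [Finset.mem_range, not_lt] at hi
        have hle : (a j).natDegree ≤ D := Finset.le_sup (f := fun j => (a j).natDegree) hj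
        have hlt : (a j).natDegree < i := by omega
        simp [Polynomial.coeff_eq_zero_of_natDegree_lt hlt]
    have bound1 : ∀ p ∈ (Finset.HasAntidiagonal.antidiagonal N).erase (h0, n),
        ‖(a 0).coeff p.1 * PowerSeries.coeff p.2 F‖ ≤ ‖(a 0).coeff p.1‖ * B := by
      intro p hp
      rw [norm_mul]
      by_cases hz : (a 0).coeff p.1 = 0
      · simp [hz]
      · refine mul_le_mul_of_nonneg_left ?_ (norm_nonneg _)
        have hp1 : h0 ≤ p.1 := by
          by_contra hlt
          exact hz (Polynomial.coeff_eq_zero_of_lt_natTrailingDegree (by omega))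
        obtain ⟨hne, hpmem⟩ := Finset.mem_erase.mp hp
        have hsum : p.1 + p.2 = N := Finset.HasAntidiagonal.mem_antidiagonal.mp hpmem
        have hp2 : p.2 < n := by
          rcases lt_or_eq_of_le hp1 with h | h
          · omega
          · exfalso; apply hne
            have h2n : p.2 = n := by omega
            exact Prod.ext h.symm h2n
        exact hBle _ hp2
    have bound2 : ∀ j ∈ Finset.range d, ∀ p ∈ Finset.HasAntidiagonal.antidiagonal N,
        ‖(a (j+1)).coeff p.1 * (if k ^ (j+1) ∣ p.2 then PowerSeries.coeff (p.2 / k ^ (j+1)) F else 0)‖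
          ≤ ‖(a (j+1)).coeff p.1‖ * B := by
      intro j _ p hp
      rw [norm_mul]
      refine mul_le_mul_of_nonneg_left ?_ (norm_nonneg _)
      split_ifs with hdvd
      · have hK : 2 ≤ k ^ (j+1) := le_trans hk (Nat.le_self_pow (Nat.succ_ne_zero j) k)
        have hmul : p.2 / k ^ (j+1) * k ^ (j+1) = p.2 := Nat.div_mul_cancel hdvd
        have h2m : 2 * (p.2 / k ^ (j+1)) ≤ p.2 := by
          calc 2 * (p.2 / k ^ (j+1)) ≤ k ^ (j+1) * (p.2 / k ^ (j+1)) :=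
                Nat.mul_le_mul_right _ hK
            _ = p.2 := by rw [Nat.mul_comm]; exact hmul
        have hsum : p.1 + p.2 = N := Finset.HasAntidiagonal.mem_antidiagonal.mp hp
        have hmn : p.2 / k ^ (j+1) < n := by omega
        exact hBle _ hmn
      · simpa using hB0
    have hR1b : ‖R1‖ ≤ ∑ j ∈ Finset.range d, ∑ p ∈ Finset.HasAntidiagonal.antidiagonal N,
        ‖(a (j+1)).coeff p.1‖ * B :=
      le_trans (norm_sum_le _ _) (Finset.sum_le_sum fun j hj =>
        le_trans (norm_sum_le _ _) (Finset.sum_le_sum fun p hp => bound2 j hj p hp))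
    have hR2b : ‖R2‖ ≤ ∑ p ∈ Finset.HasAntidiagonal.antidiagonal N, ‖(a 0).coeff p.1‖ * B := by
      refine le_trans (le_trans (norm_sum_le _ _) (Finset.sum_le_sum bound1)) ?_
      exact Finset.sum_le_sum_of_subset_of_nonneg (Finset.erase_subset _ _)
        (fun p _ _ => mul_nonneg (norm_nonneg _) hB0)
    have total : (∑ j ∈ Finset.range d, ∑ p ∈ Finset.HasAntidiagonal.antidiagonal N, ‖(a (j+1)).coeff p.1‖ * B)
        + ∑ p ∈ Finset.HasAntidiagonal.antidiagonal N, ‖(a 0).coeff p.1‖ * B = B * S := by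
      rw [← Finset.sum_range_succ' (fun j => ∑ p ∈ Finset.HasAntidiagonal.antidiagonal N, ‖(a j).coeff p.1‖ * B) d]
      rw [hSdef, Finset.mul_sum]
      refine Finset.sum_congr rfl fun j hj => ?_
      rw [← Finset.sum_mul, sumbound j hj, Finset.mul_sum, Finset.sum_mul]
      exact Finset.sum_congr rfl fun i _ => mul_comm _ _
    have hnorm : ‖c‖ * ‖PowerSeries.coeff n F‖ ≤ B * S := by
      rw [← norm_mul, e1, norm_neg, ← total]
      exact le_trans (norm_add_le _ _) (add_le_add hR1b hR2b)
    have h1 : ‖PowerSeries.coeff n F‖ ≤ B * S / ‖c‖ := by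
      rw [le_div_iff₀ hcpos, mul_comm]
      exact hnorm
    refine le_trans h1 ?_
    calc B * S / ‖c‖ = M * C ^ (n-1) * (S / ‖c‖) := by rw [hB, mul_div_assoc]
      _ ≤ M * C ^ (n-1) * C := by
          refine mul_le_mul_of_nonneg_left ?_ (mul_nonneg hM0 (pow_nonneg hC0.le _))
          rw [hC]; linarith
      _ = M * C ^ n := by
          rw [mul_assoc, ← pow_succ]
          congr 2
          omega
  -- growth bound by strong induction
  have growth : ∀ n, ‖PowerSeries.coeff n F‖ ≤ M * C ^ n := by
    intro n
    induction n using Nat.strong_induction_on with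
    | _ n ih =>
      by_cases hn : n0 ≤ n
      · exact key n hn ih
      · push_neg at hn
        have h1 : ‖PowerSeries.coeff n F‖ ≤ M := by
          rw [hM]
          have h2 : ‖PowerSeries.coeff n F‖ ≤ ∑ m ∈ Finset.range n0, ‖PowerSeries.coeff m F‖ :=
            Finset.single_le_sum (f := fun m => ‖PowerSeries.coeff m F‖)
              (fun i _ => norm_nonneg _) (Finset.mem_range.mpr hn)
          linarith
        calc ‖PowerSeries.coeff n F‖ ≤ M := h1
          _ = M * 1 := (mul_one M).symm
          _ ≤ M * C ^ n := mul_le_mul_of_nonneg_left (one_le_pow₀ hC1) hM0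
  -- summability
  refine ⟨1 / (2 * C), one_div_pos.mpr (by linarith), fun z hz => ?_⟩
  have hq0 : (0:ℝ) ≤ C * ‖z‖ := mul_nonneg hC0.le (norm_nonneg _)
  have hq1 : C * ‖z‖ < 1 := by
    have h2 : C * ‖z‖ < C * (1 / (2 * C)) := mul_lt_mul_of_pos_left hz hC0
    have h3 : C * (1 / (2 * C)) = 1 / 2 := by
      rw [hC]; field_simp
    rw [h3] at h2
    exact h2.trans_le (by norm_num)
  refine Summable.of_nonneg_of_le
    (fun n => mul_nonneg (norm_nonneg _) (pow_nonneg (norm_nonneg _) _))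
    (fun n => ?_) ((summable_geometric_of_lt_one hq0 hq1).mul_left M)
  calc ‖PowerSeries.coeff n F‖ * ‖z‖ ^ n ≤ M * C ^ n * ‖z‖ ^ n :=
        mul_le_mul_of_nonneg_right (growth n) (pow_nonneg (norm_nonneg _) _)
    _ = M * (C * ‖z‖) ^ n := by rw [mul_pow]; ring
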